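/- arXiv:2308.16273 — 2 statements merged into one kernel-verified Lean document; each statement's English description precedes it below -/
import Mathlib

section
/- Let R be a differential ring with derivation ', let a, b, c, d ∈ R be constants, and let x₁, x₂ ∈ R satisfy x₁' = a·x₁ − b·x₁·x₂ and x₂' = −c·x₂ + d·x₁·x₂. Set y = x₁. Then y·y'' − (y')² − d·y²·y' + c·y·y' + a·d·y³ − a·c·y² = 0. -/
/-- Input-output equation of the Lotka–Volterra system `x₁' = a x₁ − b x₁ x₂`,
`x₂' = −c x₂ + d x₁ x₂`, with output `y = x₁`:
`y y'' − (y')² − d y² y' + c y y' + a d y³ − a c y² = 0`. -/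
theorem stmt_7 {R : Type*} [CommRing R] (δ : R → R)
    (hadd : ∀ x y, δ (x + y) = δ x + δ y)
    (hmul : ∀ x y, δ (x * y) = δ x * y + x * δ y)
    (a b c d x₁ x₂ : R) (ha : δ a = 0) (hb : δ b = 0) (hc : δ c = 0) (hd : δ d = 0)
    (h1 : δ x₁ = a * x₁ - b * x₁ * x₂) (h2 : δ x₂ = -c * x₂ + d * x₁ * x₂) :
    x₁ * δ (δ x₁) - (δ x₁) ^ 2 - d * x₁ ^ 2 * δ x₁ + c * x₁ * δ x₁ +
      a * d * x₁ ^ 3 - a * c * x₁ ^ 2 = 0 := by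
  have h0 : δ 0 = 0 := by
    have := hadd 0 0; simpa using this
  have hneg : ∀ x, δ (-x) = -δ x := by
    intro x
    have := hadd x (-x)
    simp [h0] at this
    linear_combination -this
  have hsub : ∀ x y, δ (x - y) = δ x - δ y := by
    intro x y; rw [sub_eq_add_neg, hadd, hneg, sub_eq_add_neg]
  have key : δ (δ x₁) =
      a * (a * x₁ - b * x₁ * x₂) -
        (b * (a * x₁ - b * x₁ * x₂) * x₂ + b * x₁ * (-c * x₂ + d * x₁ * x₂)) := by
    rw [h1, hsub]; simp only [hmul, ha, hb, h1, h2]; ring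
  rw [key, h1]
  ring
end

section
/- Let R be a differential ring containing ℚ, let k₁, k₂ ∈ R be constants with this derivation, and suppose w₁, w₂, w₃ ∈ R satisfy w₁' = k₂w₃ − k₁w₁(w₃ + 2w₂), w₂' = −k₁w₁(w₃ + 2w₂) + k₂w₃, and w₃' = k₁w₁(w₃ + 2w₂) − k₂w₃. Set y = w₁. Then y'·y''' − (y'')² + 2k₁(y')³ = 0. -/
/-- Input-output equation of the reduced chemical reaction network model:
for `y = w₁`, `y' y''' − (y'')² + 2k₁ (y')³ = 0`. -/
theorem stmt_11 {R : Type*} [CommRing R] [Algebra ℚ R] (δ : R → R)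
    (hadd : ∀ x y, δ (x + y) = δ x + δ y)
    (hmul : ∀ x y, δ (x * y) = δ x * y + x * δ y)
    (k₁ k₂ w₁ w₂ w₃ : R) (hk₁ : δ k₁ = 0) (hk₂ : δ k₂ = 0)
    (h1 : δ w₁ = k₂ * w₃ - k₁ * w₁ * (w₃ + 2 * w₂))
    (h2 : δ w₂ = -(k₁ * w₁ * (w₃ + 2 * w₂)) + k₂ * w₃)
    (h3 : δ w₃ = k₁ * w₁ * (w₃ + 2 * w₂) - k₂ * w₃) :
    δ w₁ * δ (δ (δ w₁)) - (δ (δ w₁)) ^ 2 + 2 * k₁ * (δ w₁) ^ 3 = 0 := by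
  have h0 : δ 1 = 0 := by
    have h := hmul 1 1
    rw [one_mul, mul_one] at h
    linear_combination -h
  have hδ2 : δ 2 = 0 := by
    have : (2 : R) = 1 + 1 := by ring
    rw [this, hadd, h0]; ring
  have hzero : δ 0 = 0 := by
    have h := hmul 0 0
    rw [mul_zero, mul_zero, zero_mul] at h
    linear_combination h
  have hneg : ∀ x, δ (-x) = -δ x := by
    intro x
    have h := hadd x (-x)
    rw [add_neg_cancel, hzero] at h
    linear_combination -h
  have hsub : ∀ x y, δ (x - y) = δ x - δ y := by
    intro x y
    rw [sub_eq_add_neg, hadd, hneg]; ring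
  simp only [h1, hsub, hadd, hmul, hneg, hk₁, hk₂, h2, h3, hδ2, hzero]
  ring
end
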